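/- Suppose (H1) and (H4) hold with 0 ≤ μ < 2L, that g̃ = g + φ has a global minimizer y*, and let {y_k} be generated by Algorithm B. Then for all k ≥ 1, g̃(y_k) − g̃(y*) ≤ (2L − μ)·β_d(y₀, y*)/k; moreover, if μ > 0, then g̃(y_k) − g̃(y*) ≤ μ·β_d(y₀, y*)/[(1 + μ/(2L − μ))^k − 1]. -/

import Mathlib

open scoped InnerProductSpace
open Filter Topology

/-- The Bregman distance `β_d(u, v) = d(v) − d(u) − ⟨∇d(u), v − u⟩`. -/
noncomputable def breg {E : Type*} [NormedAddCommGroup E] [InnerProductSpace ℝ E]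
    [CompleteSpace E] (d : E → ℝ) (u v : E) : ℝ :=
  d v - d u - ⟪gradient d u, v - u⟫_ℝ

lemma dirDeriv {E : Type*} [NormedAddCommGroup E] [InnerProductSpace ℝ E] [CompleteSpace E]
    (f : E → ℝ) (hf : Differentiable ℝ f) (a v : E) :
    Filter.Tendsto (fun t : ℝ => (f (a + t • v) - f a) / t) (𝓝[>] 0)
      (𝓝 ⟪gradient f a, v⟫_ℝ) := by
  have h1 : HasDerivAt (fun t : ℝ => a + t • v) v 0 := by
    simpa using ((hasDerivAt_id (0:ℝ)).smul_const v).const_add a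
  have hfa : HasFDerivAt f (fderiv ℝ f a) ((fun t : ℝ => a + t • v) 0) := by
    simpa using (hf a).hasFDerivAt
  have h2 : HasDerivAt (fun t : ℝ => f (a + t • v)) (fderiv ℝ f a v) 0 :=
    hfa.comp_hasDerivAt 0 h1
  have h3 := hasDerivAt_iff_tendsto_slope.1 h2
  have h4 : Filter.Tendsto (slope (fun t : ℝ => f (a + t • v)) 0) (𝓝[>] 0)
      (𝓝 (fderiv ℝ f a v)) := h3.mono_left (nhdsWithin_mono 0 (fun x hx => ne_of_gt hx))
  have h5 : ⟪gradient f a, v⟫_ℝ = fderiv ℝ f a v := by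
    rw [gradient]; simp
  rw [h5]
  refine h4.congr (fun t => ?_)
  simp [slope_def_field]

lemma breg_nonneg {E : Type*} [NormedAddCommGroup E] [InnerProductSpace ℝ E] [CompleteSpace E]
    (d : E → ℝ) (hd : ConvexOn ℝ Set.univ d) (hd' : Differentiable ℝ d) (u v : E) :
    0 ≤ breg d u v := by
  have key : ⟪gradient d u, v - u⟫_ℝ ≤ d v - d u := by
    have hev : ∀ᶠ t in 𝓝[>] (0:ℝ), (d (u + t • (v - u)) - d u) / t ≤ d v - d u := by
      filter_upwards [Ioo_mem_nhdsGT_of_mem (Set.mem_Ico.2 ⟨le_refl (0:ℝ), zero_lt_one⟩)]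
        with t ht
      have h1 : u + t • (v - u) = (1 - t) • u + t • v := by
        rw [smul_sub, sub_smul, one_smul]; abel
      have h2 := hd.2 (Set.mem_univ u) (Set.mem_univ v)
        (by linarith [ht.2] : (0:ℝ) ≤ 1 - t) (le_of_lt ht.1) (by ring)
      rw [← h1] at h2
      rw [div_le_iff₀ ht.1]
      simp only [smul_eq_mul] at h2
      nlinarith [ht.1, h2]
    exact le_of_tendsto (dirDeriv d hd' u (v - u)) hev
  simpa [breg] using (by linarith : 0 ≤ d v - d u - ⟪gradient d u, v - u⟫_ℝ)

lemma three_point {E : Type*} [NormedAddCommGroup E] [InnerProductSpace ℝ E] [CompleteSpace E]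
    (d : E → ℝ) (hd' : Differentiable ℝ d) (c : ℝ)
    (φ : E → EReal) (hφbot : ∀ z : E, φ z ≠ ⊥)
    (hφconv : ∀ u v : E, ∀ a b : ℝ, 0 < a → 0 < b → a + b = 1 →
      φ (a • u + b • v) ≤ (a : EReal) * φ u + (b : EReal) * φ v)
    (w yk yp : E) (hp : φ yp ≠ ⊤)
    (hopt : ∀ z : E, ((⟪w, yp - yk⟫_ℝ + c * breg d yk yp : ℝ) : EReal) + φ yp
      ≤ ((⟪w, z - yk⟫_ℝ + c * breg d yk z : ℝ) : EReal) + φ z)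
    (z : E) (hz : φ z ≠ ⊤) :
    ⟪w, yp - yk⟫_ℝ + c * breg d yk yp + (φ yp).toReal + c * breg d yp z
      ≤ ⟪w, z - yk⟫_ℝ + c * breg d yk z + (φ z).toReal := by
  set P := (φ yp).toReal with hPdef
  set Q := (φ z).toReal with hQdef
  have hpc : φ yp = ((P : ℝ) : EReal) := (EReal.coe_toReal hp (hφbot _)).symm
  have hzc : φ z = ((Q : ℝ) : EReal) := (EReal.coe_toReal hz (hφbot _)).symm
  have key : 0 ≤ ⟪w, z - yp⟫_ℝ + c * ⟪gradient d yp, z - yp⟫_ℝ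
      - c * ⟪gradient d yk, z - yp⟫_ℝ + (Q - P) := by
    have hev : ∀ᶠ t in 𝓝[>] (0:ℝ), 0 ≤ ⟪w, z - yp⟫_ℝ
        + c * ((d (yp + t • (z - yp)) - d yp) / t)
        - c * ⟪gradient d yk, z - yp⟫_ℝ + (Q - P) := by
      filter_upwards [Ioo_mem_nhdsGT_of_mem (Set.mem_Ico.2 ⟨le_refl (0:ℝ), zero_lt_one⟩)]
        with t ht
      set xt := yp + t • (z - yp) with hxt
      have hxt2 : xt = (1 - t) • yp + t • z := by
        rw [hxt, smul_sub, sub_smul, one_smul]; abel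
      have hcomb : φ xt ≤ (((1 - t) * P + t * Q : ℝ) : EReal) := by
        rw [hxt2]
        calc φ ((1 - t) • yp + t • z)
            ≤ ((1 - t : ℝ) : EReal) * φ yp + ((t : ℝ) : EReal) * φ z :=
              hφconv yp z (1 - t) t (by linarith [ht.2]) ht.1 (by ring)
          _ = (((1 - t) * P + t * Q : ℝ) : EReal) := by
              rw [hpc, hzc, ← EReal.coe_mul, ← EReal.coe_mul, ← EReal.coe_add]
      have h1 := hopt xt
      rw [hpc] at h1
      have h2 : ((⟪w, yp - yk⟫_ℝ + c * breg d yk yp + P : ℝ) : EReal)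
          ≤ ((⟪w, xt - yk⟫_ℝ + c * breg d yk xt + ((1 - t) * P + t * Q) : ℝ) : EReal) := by
        rw [EReal.coe_add, EReal.coe_add]
        calc ((⟪w, yp - yk⟫_ℝ + c * breg d yk yp : ℝ) : EReal) + ((P : ℝ) : EReal)
            ≤ ((⟪w, xt - yk⟫_ℝ + c * breg d yk xt : ℝ) : EReal) + φ xt := h1
          _ ≤ _ := (add_le_add le_rfl hcomb).trans_eq (EReal.coe_add _ _).symm
      rw [EReal.coe_le_coe_iff] at h2
      have e1 : xt - yk = (yp - yk) + t • (z - yp) := by rw [hxt]; abel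
      have e2 : ⟪w, xt - yk⟫_ℝ = ⟪w, yp - yk⟫_ℝ + t * ⟪w, z - yp⟫_ℝ := by
        rw [e1, inner_add_right, real_inner_smul_right]
      have e3 : ⟪gradient d yk, xt - yk⟫_ℝ
          = ⟪gradient d yk, yp - yk⟫_ℝ + t * ⟪gradient d yk, z - yp⟫_ℝ := by
        rw [e1, inner_add_right, real_inner_smul_right]
      simp only [breg] at h2 ⊢
      rw [e2, e3] at h2
      have ht0 : (0:ℝ) < t := ht.1
      set s := (d xt - d yp) / t with hsdef
      have hs : d xt - d yp = t * s := by rw [hsdef]; field_simp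
      have h3 : 0 ≤ t * ⟪w, z - yp⟫_ℝ + c * (d xt - d yp)
          - c * (t * ⟪gradient d yk, z - yp⟫_ℝ) + t * (Q - P) := by nlinarith [h2]
      rw [hs] at h3
      have h4 : t * 0 ≤ t * (⟪w, z - yp⟫_ℝ + c * s
          - c * ⟪gradient d yk, z - yp⟫_ℝ + (Q - P)) := by nlinarith [h3]
      exact le_of_mul_le_mul_left h4 ht0
    have htend : Filter.Tendsto (fun t : ℝ => ⟪w, z - yp⟫_ℝ
        + c * ((d (yp + t • (z - yp)) - d yp) / t)
        - c * ⟪gradient d yk, z - yp⟫_ℝ + (Q - P)) (𝓝[>] 0)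
        (𝓝 (⟪w, z - yp⟫_ℝ + c * ⟪gradient d yp, z - yp⟫_ℝ
          - c * ⟪gradient d yk, z - yp⟫_ℝ + (Q - P))) :=
      ((tendsto_const_nhds.add ((dirDeriv d hd' yp (z - yp)).const_mul c)).sub
        tendsto_const_nhds).add tendsto_const_nhds
    exact ge_of_tendsto htend hev
  have e1 : z - yk = (z - yp) + (yp - yk) := by abel
  have e2 : ⟪w, z - yk⟫_ℝ = ⟪w, z - yp⟫_ℝ + ⟪w, yp - yk⟫_ℝ := by rw [e1, inner_add_right]
  have e3 : ⟪gradient d yk, z - yk⟫_ℝ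
      = ⟪gradient d yk, z - yp⟫_ℝ + ⟪gradient d yk, yp - yk⟫_ℝ := by rw [e1, inner_add_right]
  simp only [breg]
  rw [e2, e3]
  nlinarith [key]
/-- Theorem A.9. Under (H1) and (H4) with `0 ≤ μ < 2L`, if `g̃ = g + φ`
has a global minimizer `y*`, then Algorithm B satisfies, for all `k ≥ 1`,
`g̃(y_k) − g̃(y*) ≤ (2L − μ)·β_d(y₀, y*)/k`, and moreover, if `μ > 0`,
`g̃(y_k) − g̃(y*) ≤ μ·β_d(y₀, y*)/[(1 + μ/(2L − μ))^k − 1]`. -/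
theorem statement_19
    {E : Type*} [NormedAddCommGroup E] [InnerProductSpace ℝ E] [FiniteDimensional ℝ E]
    (d : E → ℝ) (hd : ConvexOn ℝ Set.univ d) (hd' : Differentiable ℝ d)
    (g : E → ℝ) (hg : Differentiable ℝ g)
    (L : ℝ) (hL : 0 < L)
    (hH1 : ∀ x y : E, g x ≤ g y + ⟪gradient g y, x - y⟫_ℝ + L * breg d y x)
    (μ : ℝ) (hμ0 : 0 ≤ μ) (hμL : μ < 2 * L)
    (hH4 : ∀ x y : E, g y + ⟪gradient g y, x - y⟫_ℝ + μ * breg d y x ≤ g x)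
    (φ : E → EReal)
    (hφbot : ∀ z : E, φ z ≠ ⊥) (hφtop : ∃ z : E, φ z ≠ ⊤)
    (hφclosed : LowerSemicontinuous φ)
    (hφconv : ∀ u v : E, ∀ a b : ℝ, 0 < a → 0 < b → a + b = 1 →
      φ (a • u + b • v) ≤ (a : EReal) * φ u + (b : EReal) * φ v)
    (y : ℕ → E) (hy0 : φ (y 0) ≠ ⊤)
    (halg : ∀ k : ℕ, φ (y (k + 1)) ≠ ⊤ ∧ ∀ z : E,
      ((⟪gradient g (y k), y (k + 1) - y k⟫_ℝ
          + 2 * L * breg d (y k) (y (k + 1)) : ℝ) : EReal) + φ (y (k + 1))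
        ≤ ((⟪gradient g (y k), z - y k⟫_ℝ + 2 * L * breg d (y k) z : ℝ) : EReal) + φ z)
    (ystar : E)
    (hmin : ∀ z : E, ((g ystar : ℝ) : EReal) + φ ystar ≤ ((g z : ℝ) : EReal) + φ z) :
    ∀ k : ℕ, 1 ≤ k →
      (((g (y k) : ℝ) : EReal) + φ (y k)
        ≤ ((g ystar : ℝ) : EReal) + φ ystar
            + (((2 * L - μ) * breg d (y 0) ystar / k : ℝ) : EReal)) ∧
      (0 < μ →
        ((g (y k) : ℝ) : EReal) + φ (y k)
          ≤ ((g ystar : ℝ) : EReal) + φ ystar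
              + ((μ * breg d (y 0) ystar / ((1 + μ / (2 * L - μ)) ^ k - 1) : ℝ) : EReal)) := by
  have hc : (0:ℝ) < 2 * L - μ := by linarith
  have hfin : ∀ k, φ (y k) ≠ ⊤ := by
    intro k
    induction k with
    | zero => exact hy0
    | succ n _ => exact (halg n).1
  have hstar : φ ystar ≠ ⊤ := by
    intro h
    have h1 := hmin (y 0)
    have hy0c : φ (y 0) = (((φ (y 0)).toReal : ℝ) : EReal) :=
      (EReal.coe_toReal (hfin 0) (hφbot _)).symm
    rw [h, hy0c, ← EReal.coe_add] at h1
    have h2 : ((g ystar : ℝ) : EReal) + ⊤ = ⊤ := by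
      rw [EReal.add_top_iff_ne_bot]
      exact EReal.coe_ne_bot _
    rw [h2] at h1
    exact EReal.coe_ne_top _ (top_le_iff.1 h1)
  have hyc : ∀ k, φ (y k) = (((φ (y k)).toReal : ℝ) : EReal) :=
    fun k => (EReal.coe_toReal (hfin k) (hφbot _)).symm
  have hsc : φ ystar = (((φ ystar).toReal : ℝ) : EReal) :=
    (EReal.coe_toReal hstar (hφbot _)).symm
  have hβn : ∀ u v : E, 0 ≤ breg d u v := breg_nonneg d hd hd'
  -- real-valued minimality of ystar
  have hδn : ∀ k, g ystar + (φ ystar).toReal ≤ g (y k) + (φ (y k)).toReal := by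
    intro k
    have h := hmin (y k)
    rw [hyc k, hsc, ← EReal.coe_add, ← EReal.coe_add, EReal.coe_le_coe_iff] at h
    exact h
  -- three point inequality
  have h3p : ∀ k, ∀ z : E, φ z ≠ ⊤ →
      ⟪gradient g (y k), y (k+1) - y k⟫_ℝ + 2 * L * breg d (y k) (y (k+1))
        + (φ (y (k+1))).toReal + 2 * L * breg d (y (k+1)) z
      ≤ ⟪gradient g (y k), z - y k⟫_ℝ + 2 * L * breg d (y k) z + (φ z).toReal :=
    fun k z hz => three_point d hd' (2 * L) φ hφbot hφconv (gradient g (y k)) (y k) (y (k+1))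
      (hfin (k+1)) (halg k).2 z hz
  -- key per-step inequality (A)
  have hA : ∀ k, (g (y (k+1)) + (φ (y (k+1))).toReal) - (g ystar + (φ ystar).toReal)
      + 2 * L * breg d (y (k+1)) ystar ≤ (2 * L - μ) * breg d (y k) ystar := by
    intro k
    have t1 := h3p k ystar hstar
    have t2 := hH1 (y (k+1)) (y k)
    have t3 := hH4 ystar (y k)
    have t5 : 0 ≤ L * breg d (y k) (y (k+1)) := mul_nonneg hL.le (hβn _ _)
    linarith [t1, t2, t3, t5]
  -- descent (B)
  have hB : ∀ k, g (y (k+1)) + (φ (y (k+1))).toReal ≤ g (y k) + (φ (y k)).toReal := by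
    intro k
    have t1 := h3p k (y k) (hfin k)
    have hself : breg d (y k) (y k) = 0 := by simp [breg]
    have hzero : ⟪gradient g (y k), y k - y k⟫_ℝ = 0 := by simp
    rw [hself, hzero] at t1
    have t2 := hH1 (y (k+1)) (y k)
    have t4 : 0 ≤ L * breg d (y k) (y (k+1)) := mul_nonneg hL.le (hβn _ _)
    have t5 : 0 ≤ L * breg d (y (k+1)) (y k) := mul_nonneg hL.le (hβn _ _)
    linarith [t1, t2, t4, t5]
  have hanti : ∀ j k : ℕ, j ≤ k →
      g (y k) + (φ (y k)).toReal ≤ g (y j) + (φ (y j)).toReal := by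
    intro j k h
    induction h with
    | refl => exact le_rfl
    | step _ ih => exact le_trans (hB _) ih
  intro k hk
  have hk0 : (0:ℝ) < (k:ℝ) := by exact_mod_cast Nat.lt_of_lt_of_le Nat.zero_lt_one hk
  have hconv : ∀ r : ℝ, g (y k) + (φ (y k)).toReal ≤ g ystar + (φ ystar).toReal + r →
      ((g (y k) : ℝ) : EReal) + φ (y k) ≤ ((g ystar : ℝ) : EReal) + φ ystar
        + ((r : ℝ) : EReal) := by
    intro r hr
    rw [hyc k, hsc, ← EReal.coe_add, ← EReal.coe_add, ← EReal.coe_add]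
    exact EReal.coe_le_coe_iff.2 hr
  constructor
  · -- sublinear rate
    have hsum : ∀ m : ℕ,
        (∑ j ∈ Finset.range m, ((g (y (j+1)) + (φ (y (j+1))).toReal)
          - (g ystar + (φ ystar).toReal)))
        + (2 * L - μ) * breg d (y m) ystar ≤ (2 * L - μ) * breg d (y 0) ystar := by
      intro m
      induction m with
      | zero => simp
      | succ n ih =>
        rw [Finset.sum_range_succ]
        have t1 := hA n
        have t2 : 0 ≤ μ * breg d (y (n+1)) ystar := mul_nonneg hμ0 (hβn _ _)
        linarith
    have hksum : ∀ m : ℕ, (m:ℝ) * ((g (y m) + (φ (y m)).toReal)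
          - (g ystar + (φ ystar).toReal))
        ≤ ∑ j ∈ Finset.range m, ((g (y (j+1)) + (φ (y (j+1))).toReal)
          - (g ystar + (φ ystar).toReal)) := by
      intro m
      induction m with
      | zero => simp
      | succ n ih =>
        rw [Finset.sum_range_succ]
        have h1 := hB n
        have h2 : (0:ℝ) ≤ (n:ℝ) := Nat.cast_nonneg n
        have h3 := mul_le_mul_of_nonneg_left
          (sub_le_sub_right h1 (g ystar + (φ ystar).toReal)) h2
        push_cast
        linarith [ih, h3]
    have hfirst : g (y k) + (φ (y k)).toReal ≤ g ystar + (φ ystar).toReal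
        + (2 * L - μ) * breg d (y 0) ystar / k := by
      have h1 := hksum k
      have h2 := hsum k
      have h3 : 0 ≤ (2 * L - μ) * breg d (y k) ystar := mul_nonneg hc.le (hβn _ _)
      have h4 : (k:ℝ) * ((g (y k) + (φ (y k)).toReal) - (g ystar + (φ ystar).toReal))
          ≤ (2 * L - μ) * breg d (y 0) ystar := by linarith
      have h5 : (g (y k) + (φ (y k)).toReal) - (g ystar + (φ ystar).toReal)
          ≤ (2 * L - μ) * breg d (y 0) ystar / k := by
        rw [le_div_iff₀ hk0]
        linarith [h4]
      linarith [h5]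
    exact hconv _ hfirst
  · -- linear rate
    intro hμ
    set ρ : ℝ := 1 + μ / (2 * L - μ) with hρdef
    have hdivpos : 0 < μ / (2 * L - μ) := div_pos hμ hc
    have hρ1 : 1 < ρ := by rw [hρdef]; linarith
    have hρ0 : (0:ℝ) ≤ ρ := by linarith
    have hρc : ρ * (2 * L - μ) = 2 * L := by rw [hρdef]; field_simp; ring
    have hgsum : ∀ m : ℕ,
        (∑ j ∈ Finset.range m, ρ^(j+1) * ((g (y (j+1)) + (φ (y (j+1))).toReal)
          - (g ystar + (φ ystar).toReal)))
        + 2 * L * (ρ^m * breg d (y m) ystar) ≤ 2 * L * breg d (y 0) ystar := by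
      intro m
      induction m with
      | zero => simp
      | succ n ih =>
        rw [Finset.sum_range_succ]
        have t1 := mul_le_mul_of_nonneg_left (hA n) (pow_nonneg hρ0 (n+1))
        have t2 : ρ^(n+1) * ((2 * L - μ) * breg d (y n) ystar)
            = 2 * L * (ρ^n * breg d (y n) ystar) := by
          linear_combination (ρ^n * breg d (y n) ystar) * hρc
        rw [t2] at t1
        nlinarith [t1, ih]
    have hterm : ∀ j ∈ Finset.range k,
        ((g (y k) + (φ (y k)).toReal) - (g ystar + (φ ystar).toReal)) * ρ^(j+1)
        ≤ ρ^(j+1) * ((g (y (j+1)) + (φ (y (j+1))).toReal)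
          - (g ystar + (φ ystar).toReal)) := by
      intro j hj
      have h1 := hanti (j+1) k (Finset.mem_range.1 hj)
      have h2 := mul_le_mul_of_nonneg_left
        (sub_le_sub_right h1 (g ystar + (φ ystar).toReal)) (pow_nonneg hρ0 (j+1))
      linarith [h2]
    have hsum2 : ((g (y k) + (φ (y k)).toReal) - (g ystar + (φ ystar).toReal))
          * (∑ j ∈ Finset.range k, ρ^(j+1))
        ≤ ∑ j ∈ Finset.range k, ρ^(j+1) * ((g (y (j+1)) + (φ (y (j+1))).toReal)
          - (g ystar + (φ ystar).toReal)) := by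
      rw [Finset.mul_sum]
      exact Finset.sum_le_sum hterm
    have hdrop : (∑ j ∈ Finset.range k, ρ^(j+1) * ((g (y (j+1)) + (φ (y (j+1))).toReal)
          - (g ystar + (φ ystar).toReal))) ≤ 2 * L * breg d (y 0) ystar := by
      have h0 := hgsum k
      have h1 : 0 ≤ 2 * L * (ρ^k * breg d (y k) ystar) :=
        mul_nonneg (by linarith) (mul_nonneg (pow_nonneg hρ0 k) (hβn _ _))
      linarith
    have hgeo : (∑ j ∈ Finset.range k, ρ^(j+1)) = ρ * ((ρ^k - 1)/(ρ - 1)) := by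
      rw [← geom_sum_eq (ne_of_gt hρ1), Finset.mul_sum]
      refine Finset.sum_congr rfl fun j _ => ?_
      rw [pow_succ]
      ring
    have hpk : 0 < ρ^k - 1 := by
      have := one_lt_pow₀ hρ1 (Nat.one_le_iff_ne_zero.1 hk)
      linarith
    have h2 : ρ - 1 = μ / (2 * L - μ) := by rw [hρdef]; ring
    have h2i : (ρ - 1)⁻¹ = (2 * L - μ) / μ := by rw [h2, inv_div]
    have h3 : ρ * ((ρ^k - 1)/(ρ - 1)) = (2 * L / μ) * (ρ^k - 1) := by
      calc ρ * ((ρ^k - 1)/(ρ - 1)) = ρ * ((ρ^k - 1) * ((2 * L - μ) / μ)) := by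
            rw [div_eq_mul_inv, h2i]
        _ = (ρ * (2 * L - μ)) * (ρ^k - 1) / μ := by ring
        _ = 2 * L * (ρ^k - 1) / μ := by rw [hρc]
        _ = (2 * L / μ) * (ρ^k - 1) := by ring
    have hchain : ((g (y k) + (φ (y k)).toReal) - (g ystar + (φ ystar).toReal))
        * ((2 * L / μ) * (ρ^k - 1)) ≤ 2 * L * breg d (y 0) ystar := by
      rw [← h3, ← hgeo]
      exact le_trans hsum2 hdrop
    have hfinal : g (y k) + (φ (y k)).toReal ≤ g ystar + (φ ystar).toReal
        + μ * breg d (y 0) ystar / (ρ^k - 1) := by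
      have h4 := mul_le_mul_of_nonneg_right hchain
        (le_of_lt (div_pos hμ (by linarith : (0:ℝ) < 2 * L)))
      have h5 : ((g (y k) + (φ (y k)).toReal) - (g ystar + (φ ystar).toReal))
          * ((2 * L / μ) * (ρ^k - 1)) * (μ / (2 * L))
          = ((g (y k) + (φ (y k)).toReal) - (g ystar + (φ ystar).toReal)) * (ρ^k - 1) := by
        field_simp
      have h6 : 2 * L * breg d (y 0) ystar * (μ / (2 * L)) = μ * breg d (y 0) ystar := by
        field_simp
      rw [h5, h6] at h4
      have h7 : ((g (y k) + (φ (y k)).toReal) - (g ystar + (φ ystar).toReal))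
          ≤ μ * breg d (y 0) ystar / (ρ^k - 1) := by
        rw [le_div_iff₀ hpk]
        exact h4
      linarith
    exact hconv _ hfinal
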